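/- Let Δ, v, w, t be positive reals. Define, for t̃ ∈ ℝ, y₁(t̃) := t̃·w/v, y₂(t̃) := Δ/v − t̃, y₃(t̃) := Δ/v + Δ/w + t̃·w/v − (1 + w/v)·(t − t̃), and let S be the set of t̃ ∈ [0, t] such that: y₃(t̃) ≥ y₂(t̃); y₃(t̃) ≥ Δ/v + Δ/w − t; y₁(t̃) ≤ Δ/v − t; and for all x ∈ [0, t − t̃], t − t̃ − x ≤ (v/w)·(t̃ + y₁(t̃) − x·w/v). Then S is nonempty if and only if t ≤ Δ·(v + 2w)/(v + w)². -/

import Mathlib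

theorem stmt_13 (Δ v w t : ℝ) (hΔ : 0 < Δ) (hv : 0 < v) (hw : 0 < w) (ht : 0 < t)
    (y₁ y₂ y₃ : ℝ → ℝ)
    (hy₁ : ∀ ttilde, y₁ ttilde = ttilde * w / v)
    (hy₂ : ∀ ttilde, y₂ ttilde = Δ / v - ttilde)
    (hy₃ : ∀ ttilde, y₃ ttilde =
      Δ / v + Δ / w + ttilde * w / v - (1 + w / v) * (t - ttilde))
    (S : Set ℝ)
    (hS : S = {ttilde ∈ Set.Icc (0:ℝ) t |
      y₃ ttilde ≥ y₂ ttilde ∧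
      y₃ ttilde ≥ Δ / v + Δ / w - t ∧
      y₁ ttilde ≤ Δ / v - t ∧
      ∀ x ∈ Set.Icc (0:ℝ) (t - ttilde),
        t - ttilde - x ≤ v / w * (ttilde + y₁ ttilde - x * w / v)}) :
    S.Nonempty ↔ t ≤ Δ * (v + 2 * w) / (v + w) ^ 2 := by
  have hv' := hv.ne'
  have hw' := hw.ne'
  have hvw : (0:ℝ) < v + 2 * w := by linarith
  constructor
  · rintro ⟨tt, htt⟩
    rw [hS] at htt
    obtain ⟨⟨h0, hle⟩, h1, h2, h3, h4⟩ := htt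
    rw [hy₃ tt] at h2
    rw [hy₁ tt] at h3
    -- h2 gives tt*(v+2w) ≥ w*t
    have h2' : w * t ≤ tt * (v + 2 * w) := by
      have hs : (0:ℝ) ≤ (tt * (v + 2 * w) - w * t) / v := by
        have := sub_nonneg.mpr h2
        have e : Δ / v + Δ / w + tt * w / v - (1 + w / v) * (t - tt)
            - (Δ / v + Δ / w - t) = (tt * (v + 2 * w) - w * t) / v := by
          field_simp; ring
        linarith [e ▸ this]
      have := (le_div_iff₀ hv).mp hs
      linarith
    have h3' : tt * w ≤ Δ - t * v := by
      have hs : (0:ℝ) ≤ (Δ - t * v - tt * w) / v := by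
        have := sub_nonneg.mpr h3
        have e : Δ / v - t - tt * w / v = (Δ - t * v - tt * w) / v := by
          field_simp
        linarith [e ▸ this]
      have := (le_div_iff₀ hv).mp hs
      linarith
    rw [le_div_iff₀ (by positivity)]
    nlinarith [mul_le_mul_of_nonneg_right h2' hw.le,
      mul_le_mul_of_nonneg_left h3' hvw.le]
  · intro h
    have key : t * (v + w) ^ 2 ≤ Δ * (v + 2 * w) := by
      rw [le_div_iff₀ (by positivity)] at h
      linarith
    refine ⟨t * w / (v + 2 * w), ?_⟩
    rw [hS]
    set tt := t * w / (v + 2 * w) with htt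
    have htt0 : 0 ≤ tt := by positivity
    have httle : tt ≤ t := by
      rw [htt, div_le_iff₀ hvw]
      nlinarith
    refine ⟨⟨htt0, httle⟩, ?_, ?_, ?_, ?_⟩
    · rw [hy₂, hy₃, ge_iff_le, ← sub_nonneg]
      have e : Δ / v + Δ / w + tt * w / v - (1 + w / v) * (t - tt) - (Δ / v - tt)
          = (Δ * (v + 2 * w) - t * w * (v + w)) / (w * (v + 2 * w)) := by
        rw [htt]; field_simp; ring
      rw [e]
      apply div_nonneg _ (by positivity)
      nlinarith [mul_pos ht (mul_pos hv (by linarith : (0:ℝ) < v + w))]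
    · rw [hy₃]
      apply ge_of_eq
      rw [htt]; field_simp; ring
    · rw [hy₁, ← sub_nonneg]
      have e : Δ / v - t - tt * w / v
          = (Δ * (v + 2 * w) - t * (v + w) ^ 2) / (v * (v + 2 * w)) := by
        rw [htt]; field_simp; ring
      rw [e]
      apply div_nonneg _ (by positivity)
      linarith
    · intro x hx
      apply le_of_eq
      rw [hy₁, htt]; field_simp; ring
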